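/- The number T_n = n^{n-2} of labeled trees on n vertices satisfies the recursion T_n = (n/2) * sum_{i=1}^{n-1} C(n-2, i-1) * T_i * T_{n-i} for all n ≥ 2. -/

import Mathlib

open Polynomial Finset

lemma step_lemma {A : Type*} [CommRing A] (n : ℕ) (f : ℕ → A) :
    ∑ k ∈ range (n+2), (-1:A)^(n+1-k) * ((n+1).choose k : A) * f k
      = ∑ k ∈ range (n+1), (-1:A)^(n-k) * (n.choose k : A) * (f (k+1) - f k) := by
  set g : ℕ → A := fun j => (-1:A)^(n+1-j) * (n.choose j : A) * f j with hg
  rw [Finset.sum_range_succ' _ (n+1)]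
  have h1 : ∀ k ∈ range (n+1),
      (-1:A)^(n+1-(k+1)) * (((n+1).choose (k+1) : ℕ) : A) * f (k+1)
        = (-1:A)^(n-k) * (n.choose k : A) * f (k+1) + g (k+1) := by
    intro k hk
    simp only [Finset.mem_range] at hk
    rw [Nat.choose_succ_succ, hg]
    have e1 : n+1-(k+1) = n-k := by omega
    push_cast [e1]
    ring
  rw [Finset.sum_congr rfl h1, Finset.sum_add_distrib]
  have h2 : ∑ k ∈ range (n+1), g (k+1) = -∑ k ∈ range (n+1), (-1:A)^(n-k) * (n.choose k : A) * f k - g 0 := by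
    have e2 : ∑ k ∈ range (n+2), g k = ∑ k ∈ range (n+1), g (k+1) + g 0 :=
      Finset.sum_range_succ' g (n+1)
    have e3 : ∑ k ∈ range (n+2), g k = ∑ k ∈ range (n+1), g k := by
      rw [Finset.sum_range_succ]
      simp [hg]
    have e4 : ∑ k ∈ range (n+1), g k
        = -∑ k ∈ range (n+1), (-1:A)^(n-k) * (n.choose k : A) * f k := by
      rw [← Finset.sum_neg_distrib]
      refine Finset.sum_congr rfl fun k hk => ?_
      simp only [Finset.mem_range] at hk
      have e5 : n+1-k = (n-k)+1 := by omega
      rw [hg]; simp only [e5, pow_succ]; ring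
    rw [← e3, e2] at e4
    linear_combination e4
  rw [h2]
  have h3 : g 0 = (-1:A)^(n+1-0) * ((n+1).choose 0 : A) * f 0 := by simp [hg]
  rw [← h3]
  rw [Finset.sum_congr rfl (fun k hk => (mul_sub ((-1:A)^(n-k) * (n.choose k : A)) (f (k+1)) (f k))), Finset.sum_sub_distrib]
  ring

lemma D_zero_or_lt (Q : ℚ[X]) :
    Q.comp (X + 1) - Q = 0 ∨ (Q.comp (X + 1) - Q).natDegree < Q.natDegree := by
  by_cases h0 : Q.comp (X + 1) - Q = 0
  · exact Or.inl h0
  · right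
    have hdeg : Q.natDegree ≠ 0 := by
      intro h
      obtain ⟨a, ha⟩ := Polynomial.natDegree_eq_zero.mp h
      apply h0; rw [← ha]; simp
    have hQ0 : Q ≠ 0 := fun h => hdeg (by simp [h])
    have hX1 : (X + 1 : ℚ[X]).natDegree = 1 := by
      simpa using Polynomial.natDegree_X_add_C (1:ℚ)
    have hcompdeg : (Q.comp (X + 1)).natDegree = Q.natDegree := by
      rw [Polynomial.natDegree_comp, hX1, mul_one]
    have hlc : (Q.comp (X + 1)).leadingCoeff = Q.leadingCoeff := by
      rw [Polynomial.leadingCoeff_comp (by rw [hX1]; norm_num)]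
      have : (X + 1 : ℚ[X]).leadingCoeff = 1 := by
        simpa using Polynomial.leadingCoeff_X_add_C (1:ℚ)
      rw [this, one_pow, mul_one]
    have hcomp0 : Q.comp (X + 1) ≠ 0 := by
      intro h
      rw [h, Polynomial.leadingCoeff_zero] at hlc
      exact hQ0 (Polynomial.leadingCoeff_eq_zero.mp hlc.symm)
    have hd : (Q.comp (X+1)).degree = Q.degree := by
      rw [Polynomial.degree_eq_natDegree hcomp0, Polynomial.degree_eq_natDegree hQ0, hcompdeg]
    have h2 : (Q.comp (X + 1) - Q).degree < Q.degree := by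
      rw [← hd]; exact Polynomial.degree_sub_lt hd hcomp0 hlc
    exact Polynomial.natDegree_lt_natDegree h0 h2

lemma fd_vanish : ∀ (n : ℕ) (Q : ℚ[X]), Q.natDegree < n →
    ∑ k ∈ range (n+1), (-1:ℚ[X])^(n-k) * (n.choose k : ℚ[X]) * Q.comp (X + (k:ℚ[X])) = 0 := by
  intro n
  induction n with
  | zero => intro Q h; omega
  | succ n ih =>
    intro Q hQ
    have hf : ∀ k : ℕ, Q.comp (X + ((k+1 : ℕ):ℚ[X])) - Q.comp (X + (k:ℚ[X]))
        = (Q.comp (X + 1) - Q).comp (X + (k:ℚ[X])) := by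
      intro k
      rw [Polynomial.sub_comp, Polynomial.comp_assoc]
      congr 2
      push_cast
      rw [Polynomial.add_comp, Polynomial.X_comp, Polynomial.one_comp]
      ring
    have := step_lemma n (fun k => Q.comp (X + (k:ℚ[X])))
    rw [this]
    rcases D_zero_or_lt Q with h | h
    · apply Finset.sum_eq_zero
      intro k hk
      rw [hf k, h, Polynomial.zero_comp, mul_zero]
    · have h2 : (Q.comp (X + 1) - Q).natDegree < n := lt_of_lt_of_le h (by omega)
      rw [← ih _ h2]
      refine Finset.sum_congr rfl fun k hk => ?_
      rw [hf k]

lemma nat_id (n k : ℕ) (h : k ≤ n) : (n+1-k) * (n+1).choose k = (n+1) * n.choose k := by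
  have h1 : (n+1).choose k = (n+1).choose (n+1-k) := (Nat.choose_symm (by omega)).symm
  have h2 : n+1-k = (n-k)+1 := by omega
  have h3 := Nat.add_one_mul_choose_eq n (n-k)
  have h4 : n.choose (n-k) = n.choose k := Nat.choose_symm h
  rw [h1, h2]
  rw [h2] at h1
  calc (n-k+1) * (n+1).choose (n-k+1) = (n+1).choose (n-k+1) * (n-k+1) := by ring
    _ = (n+1) * n.choose (n-k) := by rw [← h3]
    _ = (n+1) * n.choose k := by rw [h4]


noncomputable def Pk (k : ℕ) : Polynomial ℚ :=
  if k = 0 then 1 else Polynomial.X * (Polynomial.X + (k : Polynomial ℚ))^(k-1)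

theorem abel (n : ℕ) :
    ∑ k ∈ Finset.range (n+1), ((n.choose k : Polynomial (Polynomial ℚ)))
        * Polynomial.C (Pk k) * (Polynomial.X + ((n-k : ℕ) : Polynomial (Polynomial ℚ)))^(n-k)
      = (Polynomial.X + Polynomial.C Polynomial.X + (n : Polynomial (Polynomial ℚ)))^n := by
  induction n with
  | zero => simp [Pk]
  | succ n ih =>
    set S := Polynomial (Polynomial ℚ)
    set F : S := ∑ k ∈ Finset.range (n+2), ((n+1).choose k : S)
        * Polynomial.C (Pk k) * (Polynomial.X + ((n+1-k : ℕ) : S))^(n+1-k) with hF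
    set G : S := (Polynomial.X + Polynomial.C Polynomial.X + ((n+1 : ℕ) : S))^(n+1) with hG
    -- derivatives agree
    have hder : derivative F = derivative G := by
      have hdF : derivative F = ((n+1 : ℕ) : S) *
          ∑ k ∈ Finset.range (n+1), (n.choose k : S)
            * Polynomial.C (Pk k) * (Polynomial.X + ((n+1-k : ℕ) : S))^(n-k) := by
        
        rw [hF]
        rw [derivative_sum]
        have h1 : ∀ k ∈ range (n+2),
            derivative ((((n+1).choose k : ℚ[X][X])) * C (Pk k) * (X + ((n+1-k:ℕ) : ℚ[X][X]))^(n+1-k))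
              = (((n+1-k) * (n+1).choose k : ℕ) : ℚ[X][X]) * C (Pk k)
                  * (X + ((n+1-k:ℕ) : ℚ[X][X]))^(n+1-k-1) := by
          intro k hk
          rw [derivative_mul, derivative_mul, derivative_natCast, derivative_C, derivative_pow,
            derivative_add, derivative_X, derivative_natCast]
          push_cast [map_natCast]
          ring
        rw [Finset.sum_congr rfl h1, Finset.sum_range_succ]
        simp only [Nat.sub_self, Nat.zero_mul, Nat.cast_zero, zero_mul]
        rw [add_zero, Finset.mul_sum]
        refine Finset.sum_congr rfl fun k hk => ?_
        simp only [Finset.mem_range] at hk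
        have hk' : k ≤ n := by omega
        rw [nat_id n k hk']
        have h2 : n+1-k-1 = n-k := by omega
        rw [h2]
        push_cast
        rw [Nat.cast_add (R := ℚ[X][X]), Nat.cast_one (R := ℚ[X][X])]
        ring
      have hcomp : ∑ k ∈ Finset.range (n+1), (n.choose k : S)
            * Polynomial.C (Pk k) * (Polynomial.X + ((n+1-k : ℕ) : S))^(n-k)
          = (Polynomial.X + Polynomial.C Polynomial.X + ((n+1:ℕ) : S))^n := by
        
        have h := congrArg (fun p : ℚ[X][X] => p.comp (X + 1)) ih
        rw [← coe_compRingHom_apply, map_sum] at h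
        have h2 : ∀ k ∈ range (n+1),
            compRingHom (X+1) ((n.choose k : ℚ[X][X]) * C (Pk k) * (X + ((n-k : ℕ) : ℚ[X][X]))^(n-k))
              = (n.choose k : ℚ[X][X]) * C (Pk k) * (X + ((n+1-k:ℕ) : ℚ[X][X]))^(n-k) := by
          intro k hk
          simp only [Finset.mem_range] at hk
          rw [coe_compRingHom_apply, mul_comp, mul_comp, natCast_comp, C_comp, pow_comp, add_comp,
            X_comp, natCast_comp]
          have h3 : n+1-k = (n-k)+1 := by omega
          rw [h3]
          push_cast
          ring
        rw [Finset.sum_congr rfl h2] at h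
        rw [h, pow_comp, add_comp, add_comp, X_comp, C_comp, natCast_comp]
        push_cast
        rw [Nat.cast_add (R := ℚ[X][X]), Nat.cast_one (R := ℚ[X][X])]
        ring
      have hdG : derivative G = ((n+1 : ℕ) : S) *
          (Polynomial.X + Polynomial.C Polynomial.X + ((n+1:ℕ) : S))^n := by
        rw [hG, derivative_pow, derivative_add, derivative_add, derivative_X,
          derivative_C, derivative_natCast]
        push_cast [map_add, map_natCast, map_one]
        rw [Nat.cast_add (R := ℚ[X][X]), Nat.cast_one (R := ℚ[X][X])]
        ring
      rw [hdF, hcomp, hdG]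
    -- hence F - G is a constant
    have hconst : F - G = Polynomial.C ((F - G).coeff 0) := by
      apply Polynomial.eq_C_of_derivative_eq_zero
      rw [derivative_sub, hder, sub_self]
    -- evaluate at y₀
    have heval : Polynomial.eval (-(Polynomial.X + ((n+1:ℕ) : Polynomial ℚ))) F
        = Polynomial.eval (-(Polynomial.X + ((n+1:ℕ) : Polynomial ℚ))) G := by
      
      rw [hF, hG]
      set y₀ : ℚ[X] := -(Polynomial.X + ((n+1:ℕ) : Polynomial ℚ)) with hy
      have hrhs : Polynomial.eval y₀ ((X + C X + ((n+1:ℕ) : ℚ[X][X]))^(n+1)) = 0 := by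
        rw [eval_pow, eval_add, eval_add, eval_X, eval_C, eval_natCast, hy]
        ring_nf
      rw [hrhs, eval_finset_sum]
      have h1 : ∀ k ∈ range (n+2),
          Polynomial.eval y₀ ((((n+1).choose k : ℚ[X][X])) * C (Pk k) * (X + ((n+1-k:ℕ) : ℚ[X][X]))^(n+1-k))
            = X * ((-1:ℚ[X])^(n+1-k) * ((n+1).choose k : ℚ[X]) * (X^n).comp (X + (k:ℚ[X]))) := by
        intro k hk
        simp only [Finset.mem_range] at hk
        rw [eval_mul, eval_mul, eval_natCast, eval_C, eval_pow, eval_add, eval_X, eval_natCast]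
        have h2 : y₀ + ((n+1-k:ℕ) : ℚ[X]) = -(X + (k:ℚ[X])) := by
          rw [hy]
          have h4 : ((n+1-k:ℕ) : ℚ[X]) = ((n+1:ℕ):ℚ[X]) - (k:ℚ[X]) := Nat.cast_sub (by omega)
          rw [h4]; ring
        rw [h2, neg_pow, pow_comp, X_comp]
        rcases Nat.eq_zero_or_pos k with hk0 | hk1
        · subst hk0
          simp only [Pk, reduceIte, mul_one, Nat.cast_zero, add_zero, Nat.sub_zero]
          try rw [pow_succ']
          try ring
        · rw [Pk, if_neg (by omega)]
          have h3 : (X + (k:ℚ[X]))^n = (X + (k:ℚ[X]))^(k-1) * (X + (k:ℚ[X]))^(n+1-k) := by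
            rw [← pow_add]
            congr 1
            omega
          rw [h3]
          ring
      rw [Finset.sum_congr rfl h1, ← Finset.mul_sum]
      rw [fd_vanish (n+1) (X^n) (by simpa using Nat.lt_succ_self n), mul_zero]
    have hc0 : (F - G).coeff 0 = 0 := by
      have := congrArg (Polynomial.eval (-(Polynomial.X + ((n+1:ℕ) : Polynomial ℚ)))) hconst
      rw [Polynomial.eval_sub, heval, sub_self, Polynomial.eval_C] at this
      exact this.symm
    have : F - G = 0 := by rw [hconst, hc0, Polynomial.C_0]
    exact sub_eq_zero.mp this

lemma key_sum (n : ℕ) :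
    ∑ k ∈ range (n+1), ((n.choose k : ℚ[X])) * Pk k * (((n-k:ℕ)) : ℚ[X])^(n-k)
      = (X + ((n:ℕ) : ℚ[X]))^n := by
  have h := congrArg (Polynomial.eval (0 : ℚ[X])) (abel n)
  rw [eval_finset_sum, eval_pow, eval_add, eval_add, eval_X, eval_C, eval_natCast] at h
  rw [show (0 : ℚ[X]) + X + ((n:ℕ):ℚ[X]) = X + ((n:ℕ):ℚ[X]) by ring] at h
  rw [← h]
  refine Finset.sum_congr rfl fun k hk => ?_
  rw [eval_mul, eval_mul, eval_natCast, eval_C, eval_pow, eval_add, eval_X, eval_natCast, zero_add]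

lemma coeff1_Pk (k : ℕ) (hk : 1 ≤ k) : (Pk k).coeff 1 = (k:ℚ)^(k-1) := by
  rw [Pk, if_neg (by omega)]
  have : (1:ℕ) = 0 + 1 := rfl
  rw [this, Polynomial.coeff_X_mul]
  rw [show ((k:ℕ) : ℚ[X]) = C ((k:ℕ) : ℚ) by simp, Polynomial.coeff_X_add_C_pow]
  simp

lemma key1 (n : ℕ) (hn : 1 ≤ n) :
    ∑ k ∈ Finset.Ico 1 n, (n.choose k : ℚ) * (k:ℚ)^(k-1) * ((n-k:ℕ):ℚ)^(n-k)
      = (n:ℚ)^n - (n:ℚ)^(n-1) := by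
  have h := congrArg (fun p : ℚ[X] => p.coeff 1) (key_sum n)
  rw [Polynomial.finset_sum_coeff] at h
  have h2 : ∀ k ∈ range (n+1),
      (((n.choose k : ℚ[X])) * Pk k * (((n-k:ℕ)) : ℚ[X])^(n-k)).coeff 1
        = (n.choose k : ℚ) * ((n-k:ℕ):ℚ)^(n-k) * (Pk k).coeff 1 := by
    intro k hk
    rw [show ((n.choose k : ℕ) : ℚ[X]) = C ((n.choose k : ℕ) : ℚ) by simp,
        show ((n-k:ℕ) : ℚ[X]) = C ((n-k:ℕ) : ℚ) by simp, ← C_pow]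
    rw [mul_comm (C ((n.choose k : ℕ) : ℚ) * Pk k) _, ← mul_assoc, ← C_mul, coeff_C_mul]
    ring
  rw [Finset.sum_congr rfl h2] at h
  rw [show ((n:ℕ) : ℚ[X]) = C ((n:ℕ) : ℚ) by simp, Polynomial.coeff_X_add_C_pow] at h
  -- split off k = 0 and k = n
  rw [Finset.range_eq_Ico] at h
  rw [Finset.sum_eq_sum_Ico_succ_bot (by omega)] at h
  rw [show (0+1 : ℕ) = 1 from rfl] at h
  rw [Finset.sum_Ico_succ_top (by omega : 1 ≤ n)] at h
  have e0 : (Pk 0).coeff 1 = 0 := by simp [Pk, Polynomial.coeff_one]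
  have en : (Pk n).coeff 1 = (n:ℚ)^(n-1) := coeff1_Pk n hn
  rw [e0, en] at h
  simp only [mul_zero, zero_add, Nat.sub_self, Nat.cast_zero, pow_zero, Nat.choose_self,
    Nat.cast_one, one_mul, mul_one] at h
  have h3 : ∑ k ∈ Finset.Ico 1 n, (n.choose k : ℚ) * ((n-k:ℕ):ℚ)^(n-k) * (Pk k).coeff 1
      = ∑ k ∈ Finset.Ico 1 n, (n.choose k : ℚ) * (k:ℚ)^(k-1) * ((n-k:ℕ):ℚ)^(n-k) := by
    refine Finset.sum_congr rfl fun k hk => ?_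
    rw [Finset.mem_Ico] at hk
    rw [coeff1_Pk k hk.1]
    ring
  rw [h3] at h
  have h4 : (n:ℚ)^(n-1) * (n.choose 1 : ℚ) = (n:ℚ)^n := by
    rw [Nat.choose_one_right]
    rw [← pow_succ]
    congr 1
    omega
  rw [h4] at h
  linarith [h]

-- symmetrized version
lemma key1' (n : ℕ) (hn : 1 ≤ n) :
    ∑ k ∈ Finset.Ico 1 n, (n.choose k : ℚ) * (k:ℚ)^k * ((n-k:ℕ):ℚ)^(n-k-1)
      = (n:ℚ)^n - (n:ℚ)^(n-1) := by
  rw [← key1 n hn]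
  refine Finset.sum_nbij' (fun k => n - k) (fun k => n - k) ?_ ?_ ?_ ?_ ?_
  · intro k hk
    simp only [Finset.mem_Ico] at hk ⊢
    omega
  · intro k hk
    simp only [Finset.mem_Ico] at hk ⊢
    omega
  · intro k hk
    simp only [Finset.mem_Ico] at hk
    omega
  · intro k hk
    simp only [Finset.mem_Ico] at hk
    omega
  · intro k hk
    simp only [Finset.mem_Ico] at hk
    have h1 : n.choose (n-k) = n.choose k := Nat.choose_symm (by omega)
    have h2 : n - (n - k) = k := by omega
    rw [h1, h2]
    ring

lemma key2 (n : ℕ) (hn : 2 ≤ n) :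
    (n:ℚ) * ∑ k ∈ Finset.Ico 1 n, (n.choose k : ℚ) * (k:ℚ)^(k-1) * ((n-k:ℕ):ℚ)^(n-k-1)
      = 2*((n:ℚ)^n - (n:ℚ)^(n-1)) := by
  rw [Finset.mul_sum]
  have h : ∀ k ∈ Finset.Ico 1 n,
      (n:ℚ) * ((n.choose k : ℚ) * (k:ℚ)^(k-1) * ((n-k:ℕ):ℚ)^(n-k-1))
        = (n.choose k : ℚ) * (k:ℚ)^(k-1) * ((n-k:ℕ):ℚ)^(n-k)
          + (n.choose k : ℚ) * (k:ℚ)^k * ((n-k:ℕ):ℚ)^(n-k-1) := by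
    intro k hk
    simp only [Finset.mem_Ico] at hk
    have hc : (n:ℚ) = (k:ℚ) + ((n-k:ℕ):ℚ) := by
      rw [Nat.cast_sub (by omega)]; ring
    have hp1 : (k:ℚ)^k = (k:ℚ)^(k-1) * (k:ℚ) := by
      rw [← pow_succ]; congr 1; omega
    have hp2 : ((n-k:ℕ):ℚ)^(n-k) = ((n-k:ℕ):ℚ)^(n-k-1) * ((n-k:ℕ):ℚ) := by
      rw [← pow_succ]; congr 1; omega
    rw [hc, hp1, hp2]; ring
  rw [Finset.sum_congr rfl h, Finset.sum_add_distrib, key1 n (by omega), key1' n (by omega)]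
  ring

-- relation between choose coefficients
lemma choose_rel (n i : ℕ) (h1 : 1 ≤ i) (h2 : i < n) (hn : 2 ≤ n) :
    n.choose i * i * (n - i) = n * (n-1) * ((n-2).choose (i-1)) := by
  have e1 : n.choose i * i = n * (n-1).choose (i-1) := by
    have := Nat.add_one_mul_choose_eq (n-1) (i-1)
    have hn1 : n-1+1 = n := by omega
    have hi1 : i-1+1 = i := by omega
    rw [hn1, hi1] at this
    omega
  have e2 : (n-1).choose (i-1) = (n-1).choose (n-i) := by
    have := Nat.choose_symm (n := n-1) (k := i-1) (by omega)
    have h3 : n - 1 - (i-1) = n - i := by omega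
    rw [h3] at this
    omega
  have e3 : (n-1).choose (n-i) * (n-i) = (n-1) * (n-2).choose (n-i-1) := by
    have := Nat.add_one_mul_choose_eq (n-2) (n-i-1)
    have hn1 : n-2+1 = n-1 := by omega
    have hi1 : n-i-1+1 = n-i := by omega
    rw [hn1, hi1] at this
    omega
  have e4 : (n-2).choose (n-i-1) = (n-2).choose (i-1) := by
    have := Nat.choose_symm (n := n-2) (k := n-i-1) (by omega)
    have h3 : n - 2 - (n-i-1) = i - 1 := by omega
    rw [h3] at this
    omega
  calc n.choose i * i * (n-i) = n * ((n-1).choose (n-i) * (n-i)) := by rw [e1, e2]; ring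
    _ = n * ((n-1) * (n-2).choose (i-1)) := by rw [e3, e4]
    _ = n * (n-1) * (n-2).choose (i-1) := by ring

lemma powaux (m : ℕ) (hm : 1 ≤ m) : (m:ℚ)^(m-1) = (m:ℚ)^(m-2)*(m:ℚ) := by
  rcases Nat.eq_or_lt_of_le hm with h | h
  · rw [← h]; norm_num
  · rw [← pow_succ]; congr 1; omega

/-- The number `T n = n^(n-2)` of labeled trees on `n` vertices satisfies the recursion
`T n = (n/2) * ∑_{i=1}^{n-1} C(n-2, i-1) * T i * T (n-i)` for all `n ≥ 2`. -/
theorem cayley_recursion (n : ℕ) (hn : 2 ≤ n) :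
    (n : ℚ) ^ (n - 2) = ((n : ℚ) / 2) *
      ∑ i ∈ Finset.Ico 1 n,
        ((n - 2).choose (i - 1) : ℚ) * (i : ℚ) ^ (i - 2) * ((n - i : ℕ) : ℚ) ^ (n - i - 2) := by
  set a : ℚ := (n:ℚ) with ha_def
  have ha2 : (2:ℚ) ≤ a := by rw [ha_def]; exact_mod_cast hn
  have ha : a ≠ 0 := by linarith
  have ha1 : a - 1 ≠ 0 := by intro h; linarith [h]
  set Tt : ℚ := ∑ i ∈ Finset.Ico 1 n,
      ((n - 2).choose (i - 1) : ℚ) * (i : ℚ) ^ (i - 2) * ((n - i : ℕ) : ℚ) ^ (n - i - 2) with hTt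
  set S : ℚ := ∑ k ∈ Finset.Ico 1 n, (n.choose k : ℚ) * (k:ℚ)^(k-1) * ((n-k:ℕ):ℚ)^(n-k-1) with hS_def
  have hS : a*(a-1) * Tt = S := by
    rw [hTt, hS_def, Finset.mul_sum]
    refine Finset.sum_congr rfl fun i hi => ?_
    simp only [Finset.mem_Ico] at hi
    have hcr := choose_rel n i hi.1 hi.2 hn
    have hcrq : (n.choose i : ℚ) * (i:ℚ) * ((n-i:ℕ):ℚ) = a*(a-1)*((n-2).choose (i-1) : ℚ) := by
      have := congrArg (fun m : ℕ => (m:ℚ)) hcr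
      push_cast at this
      rw [Nat.cast_sub (by omega : 1 ≤ n)] at this
      push_cast at this
      rw [ha_def]
      linarith [this]
    have hp1 : (i:ℚ)^(i-1) = (i:ℚ)^(i-2)*(i:ℚ) := powaux i hi.1
    have hp2 : ((n-i:ℕ):ℚ)^(n-i-1) = ((n-i:ℕ):ℚ)^(n-i-2)*((n-i:ℕ):ℚ) := by
      have := powaux (n-i) (by omega)
      rw [show n-i-1 = (n-i)-1 from rfl, show n-i-2 = (n-i)-2 from rfl]
      exact this
    rw [hp1, hp2]
    calc a*(a-1) * (((n - 2).choose (i - 1) : ℚ) * (i : ℚ) ^ (i - 2) * ((n - i : ℕ) : ℚ) ^ (n - i - 2))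
        = ((n.choose i : ℚ) * (i:ℚ) * ((n-i:ℕ):ℚ)) * ((i : ℚ) ^ (i - 2) * ((n - i : ℕ) : ℚ) ^ (n - i - 2)) := by
          rw [hcrq]; ring
      _ = (n.choose i : ℚ) * ((i:ℚ)^(i-2)*(i:ℚ)) * (((n-i:ℕ):ℚ)^(n-i-2)*((n-i:ℕ):ℚ)) := by ring
  have hk2 : a * S = 2*(a^n - a^(n-1)) := key2 n hn
  have hpn : a^n = a^(n-2)*a*a := by
    rw [← pow_succ, ← pow_succ]; congr 1; omega
  have hpn1 : a^(n-1) = a^(n-2)*a := by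
    rw [← pow_succ]; congr 1; omega
  have hS2 : S = 2*a^(n-2)*(a-1) := by
    apply mul_left_cancel₀ ha
    rw [hk2, hpn, hpn1]; ring
  apply mul_left_cancel₀ (show a*(a-1)*2 ≠ 0 by
    intro h
    rcases mul_eq_zero.mp h with h' | h'
    · rcases mul_eq_zero.mp h' with h'' | h''
      · exact ha h''
      · exact ha1 h''
    · norm_num at h')
  calc a*(a-1)*2 * a^(n-2) = a * (2*a^(n-2)*(a-1)) := by ring
    _ = a * S := by rw [hS2]
    _ = a * (a*(a-1)*Tt) := by rw [hS]
    _ = a*(a-1)*2 * (a/2*Tt) := by ring
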